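/- If f : [a,b] → ℝ is càdlàg and c ≤ sup_{s,u∈[a,b]} |f(s) − f(u)|, then there is a unique function g : [a,b] → ℝ with ‖g − f‖_∞ ≤ c/2 and TV(g,[a,s]) = TV^c(f,[a,s]) for every s ∈ (a,b]. -/

import Mathlib

open Set Filter

/-- A finite partition `t 0 < t 1 < ... < t n` of points in `[a, b]`. -/
def IsPart (a b : ℝ) (n : ℕ) (t : ℕ → ℝ) : Prop :=
  a ≤ t 0 ∧ t n ≤ b ∧ ∀ i < n, t i < t (i + 1)

/-- Total variation of `f` on `[a, b]`. -/
noncomputable def TVar {E : Type*} [PseudoMetricSpace E] (f : ℝ → E) (a b : ℝ) : ENNReal :=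
  ⨆ (n : ℕ) (t : ℕ → ℝ) (_ : IsPart a b n t),
    ∑ i ∈ Finset.range n, ENNReal.ofReal (dist (f (t (i + 1))) (f (t i)))

/-- Truncated variation of `f` at level `c` on `[a, b]`. -/
noncomputable def TVc {E : Type*} [PseudoMetricSpace E] (f : ℝ → E) (c a b : ℝ) : ENNReal :=
  ⨆ (n : ℕ) (t : ℕ → ℝ) (_ : IsPart a b n t),
    ∑ i ∈ Finset.range n, ENNReal.ofReal (dist (f (t (i + 1))) (f (t i)) - c)

/-- Upward truncated variation. -/
noncomputable def UTVc (f : ℝ → ℝ) (c a b : ℝ) : ENNReal :=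
  ⨆ (n : ℕ) (t : ℕ → ℝ) (_ : IsPart a b n t),
    ∑ i ∈ Finset.range n, ENNReal.ofReal (f (t (i + 1)) - f (t i) - c)

/-- Downward truncated variation. -/
noncomputable def DTVc (f : ℝ → ℝ) (c a b : ℝ) : ENNReal :=
  ⨆ (n : ℕ) (t : ℕ → ℝ) (_ : IsPart a b n t),
    ∑ i ∈ Finset.range n, ENNReal.ofReal (f (t i) - f (t (i + 1)) - c)

/-- `f` is càdlàg on `[a, b]`: right-continuous on `[a, b)`, with left limits on `(a, b]`. -/
def Cadlag {E : Type*} [TopologicalSpace E] (f : ℝ → E) (a b : ℝ) : Prop :=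
  (∀ t ∈ Set.Ico a b, Tendsto f (nhdsWithin t (Set.Ioi t)) (nhds (f t))) ∧
  (∀ t ∈ Set.Ioc a b, ∃ l, Tendsto f (nhdsWithin t (Set.Iio t)) (nhds l))

namespace OptApprox

/-- monotonicity of a strictly increasing finite sequence -/
lemma seq_mono {n : ℕ} {t : ℕ → ℝ} (ht : ∀ i < n, t i < t (i + 1)) :
    ∀ {i j}, i ≤ j → j ≤ n → t i ≤ t j := by
  intro i j hij hjn
  induction j with
  | zero => simp_all
  | succ k ih =>
    rcases Nat.eq_or_lt_of_le hij with h | h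
    · rw [h]
    · exact le_trans (ih (by omega) (by omega)) (ht k (by omega)).le

lemma isPart_mem {a b : ℝ} {n : ℕ} {t : ℕ → ℝ} (h : IsPart a b n t) {i : ℕ} (hi : i ≤ n) :
    t i ∈ Icc a b :=
  ⟨le_trans h.1 (seq_mono h.2.2 (Nat.zero_le i) hi),
   le_trans (seq_mono h.2.2 hi le_rfl) h.2.1⟩

/-- the partition sum -/
noncomputable def psum {E : Type*} [PseudoMetricSpace E] (F : ℝ → E) (cc : ℝ) (n : ℕ)
    (t : ℕ → ℝ) : ENNReal :=
  ∑ i ∈ Finset.range n, ENNReal.ofReal (dist (F (t (i + 1))) (F (t i)) - cc)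

lemma TVc_eq_psum {E : Type*} [PseudoMetricSpace E] (F : ℝ → E) (cc a s : ℝ) :
    TVc F cc a s = ⨆ (n : ℕ) (t : ℕ → ℝ) (_ : IsPart a s n t), psum F cc n t := rfl

lemma psum_le_TVc {E : Type*} [PseudoMetricSpace E] {F : ℝ → E} {cc a s : ℝ} {n : ℕ}
    {t : ℕ → ℝ} (h : IsPart a s n t) : psum F cc n t ≤ TVc F cc a s := by
  rw [TVc_eq_psum]
  exact le_iSup_of_le n (le_iSup_of_le t (le_iSup_of_le h le_rfl))

lemma TVc_le {E : Type*} [PseudoMetricSpace E] {F : ℝ → E} {cc a s : ℝ} {X : ENNReal}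
    (h : ∀ (n : ℕ) (t : ℕ → ℝ), IsPart a s n t → psum F cc n t ≤ X) :
    TVc F cc a s ≤ X := by
  rw [TVc_eq_psum]
  exact iSup_le fun n => iSup_le fun t => iSup_le fun ht => h n t ht

lemma TVc_mono {E : Type*} [PseudoMetricSpace E] (F : ℝ → E) (cc a : ℝ) {s u : ℝ}
    (h : s ≤ u) : TVc F cc a s ≤ TVc F cc a u := by
  refine TVc_le fun n t ht => psum_le_TVc ⟨ht.1, le_trans ht.2.1 h, ht.2.2⟩

lemma TVc_self {E : Type*} [PseudoMetricSpace E] (F : ℝ → E) (cc a : ℝ) :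
    TVc F cc a a = 0 := by
  refine le_antisymm (TVc_le fun n t ht => ?_) (zero_le)
  have hn : n = 0 := by
    by_contra h
    have h1 : t 0 < t n := by
      have := seq_mono ht.2.2 (Nat.one_le_iff_ne_zero.2 h) le_rfl
      exact lt_of_lt_of_le (ht.2.2 0 (by omega)) this
    have := ht.1
    have := ht.2.1
    linarith
  simp [psum, hn]

lemma TVar_eq_TVc {E : Type*} [PseudoMetricSpace E] (F : ℝ → E) (a s : ℝ) :
    TVar F a s = TVc F 0 a s := by
  simp [TVar, TVc]


-- NEW PART
/-- appending one point to a partition -/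
lemma psum_append {E : Type*} [PseudoMetricSpace E] (F : ℝ → E) (cc : ℝ) {a s u z : ℝ}
    {n : ℕ} {t : ℕ → ℝ} (ht : IsPart a s n t) (hz : t n < z) (hzu : z ≤ u) :
    IsPart a u (n + 1) (fun i => if i ≤ n then t i else z) ∧
      psum F cc (n + 1) (fun i => if i ≤ n then t i else z) =
        psum F cc n t + ENNReal.ofReal (dist (F z) (F (t n)) - cc) := by
  constructor
  · refine ⟨by simpa using ht.1, by simp [hzu], fun i hi => ?_⟩
    rcases Nat.lt_or_ge i n with h | h
    · simpa [Nat.le_of_lt h, Nat.succ_le_of_lt h] using ht.2.2 i h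
    · have hi' : i = n := by omega
      simp [hi', hz]
  · rw [psum, Finset.sum_range_succ]
    congr 1
    · refine Finset.sum_congr rfl fun i hi => ?_
      have hi' : i < n := Finset.mem_range.1 hi
      simp [Nat.le_of_lt hi', Nat.succ_le_of_lt hi']
    · simp

lemma single_le_TVc {E : Type*} [PseudoMetricSpace E] (F : ℝ → E) (cc : ℝ) {a s u : ℝ}
    (has : a ≤ s) (hsu : s < u) :
    ENNReal.ofReal (dist (F u) (F s) - cc) ≤ TVc F cc a u := by
  have h : IsPart a u 1 (fun i => if i = 0 then s else u) := by
    refine ⟨by simpa using has, by simp, fun i hi => ?_⟩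
    interval_cases i
    simp [hsu]
  have := psum_le_TVc (F := F) (cc := cc) h
  simpa [psum] using this

/-- superadditivity with a single extra increment -/
lemma TVc_append {E : Type*} [PseudoMetricSpace E] (F : ℝ → E) {cc : ℝ} (hcc : 0 ≤ cc)
    {a s u : ℝ} (has : a ≤ s) (hsu : s ≤ u) :
    TVc F cc a s + ENNReal.ofReal (dist (F u) (F s) - cc) ≤ TVc F cc a u := by
  rcases eq_or_lt_of_le hsu with rfl | hsu'
  · rw [dist_self]
    rw [show (0:ℝ) - cc = -cc by ring, ENNReal.ofReal_of_nonpos (by linarith)]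
    simp
  have key : ∀ (n : ℕ) (t : ℕ → ℝ), IsPart a s n t →
      psum F cc n t + ENNReal.ofReal (dist (F u) (F s) - cc) ≤ TVc F cc a u := by
    intro n t ht
    rcases eq_or_lt_of_le ht.2.1 with hts | hts
    · obtain ⟨h1, h2⟩ := psum_append F cc (u := u) ht (by rw [hts]; exact hsu') le_rfl
      calc psum F cc n t + ENNReal.ofReal (dist (F u) (F s) - cc)
          = psum F cc (n+1) _ := by rw [h2, hts]
        _ ≤ TVc F cc a u := psum_le_TVc h1
    · obtain ⟨h1, h2⟩ := psum_append F cc (u := u) ht hts hsu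
      have h1' : IsPart a s (n+1) (fun i => if i ≤ n then t i else s) :=
        ⟨h1.1, by simp, h1.2.2⟩
      have hn : ¬ (n+1 ≤ n) := by omega
      obtain ⟨g1, g2⟩ := psum_append F cc (u := u) h1' (by simpa [hn] using hsu') le_rfl
      calc psum F cc n t + ENNReal.ofReal (dist (F u) (F s) - cc)
          ≤ psum F cc (n+1) (fun i => if i ≤ n then t i else s)
              + ENNReal.ofReal (dist (F u) (F s) - cc) := by
            rw [h2]; gcongr; exact le_add_right le_rfl
        _ = psum F cc (n+2) _ := by rw [g2]; simp [hn]
        _ ≤ TVc F cc a u := psum_le_TVc g1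
  rw [TVc_eq_psum F cc a s, ENNReal.iSup_add]
  refine iSup_le fun n => ?_
  rw [ENNReal.iSup_add]
  refine iSup_le fun t => ?_
  by_cases hP : IsPart a s n t
  · simp only [hP, iSup_pos]
    exact key n t hP
  · simp only [hP, iSup_false, bot_eq_zero, zero_add]
    exact single_le_TVc F cc has hsu'



variable {a b : ℝ} {f : ℝ → ℝ}

/-- `Q f a ε y`: there is a partition of `[a,y]` into finitely many pieces
`[r i, r (i+1))` on each of which `f` oscillates by at most `ε`. -/
def Q (f : ℝ → ℝ) (a ε y : ℝ) : Prop :=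
  ∃ (K : ℕ) (r : ℕ → ℝ), r 0 = a ∧ r K = y ∧ (∀ i < K, r i < r (i + 1)) ∧
    ∀ i < K, ∀ u ∈ Ico (r i) (r (i+1)), ∀ v ∈ Ico (r i) (r (i+1)), |f u - f v| ≤ ε

lemma Q_self (f : ℝ → ℝ) (a ε : ℝ) : Q f a ε a :=
  ⟨0, fun _ => a, rfl, rfl, by omega, by omega⟩

lemma Q_ext {ε y y' : ℝ} (hQ : Q f a ε y) (hyy' : y < y')
    (hosc : ∀ u ∈ Ico y y', ∀ v ∈ Ico y y', |f u - f v| ≤ ε) : Q f a ε y' := by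
  obtain ⟨K, r, h0, hK, hstr, hpc⟩ := hQ
  refine ⟨K + 1, fun i => if i ≤ K then r i else y', by simpa using h0, by simp, ?_, ?_⟩
  · intro i hi
    rcases Nat.lt_or_ge i K with h | h
    · simpa [Nat.le_of_lt h, Nat.succ_le_of_lt h] using hstr i h
    · have hi' : i = K := by omega
      simp [hi', hK, hyy']
  · intro i hi u hu v hv
    rcases Nat.lt_or_ge i K with h | h
    · have e1 : i ≤ K := Nat.le_of_lt h
      have e2 : i + 1 ≤ K := Nat.succ_le_of_lt h
      simp only [if_pos e1, if_pos e2] at hu hv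
      exact hpc i h u hu v hv
    · have hi' : i = K := by omega
      have hn : ¬ (K + 1 ≤ K) := by omega
      simp only [hi', if_pos le_rfl, hn, if_false, hK] at hu hv
      exact hosc u hu v hv

/-- Key partition lemma for càdlàg functions: `[a,b]` splits into finitely many
half-open pieces with oscillation at most `ε`. -/
lemma exists_osc_partition (hab : a < b) (hf : Cadlag f a b) {ε : ℝ} (hε : 0 < ε) :
    ∃ (K : ℕ) (r : ℕ → ℝ), r 0 = a ∧ r K = b ∧ (∀ i < K, r i < r (i + 1)) ∧
      ∀ i < K, ∀ u ∈ Ico (r i) (r (i+1)), ∀ v ∈ Ico (r i) (r (i+1)), |f u - f v| ≤ ε := by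
  set S : Set ℝ := {y | y ∈ Icc a b ∧ Q f a ε y} with hS
  have haS : a ∈ S := ⟨⟨le_rfl, hab.le⟩, Q_self f a ε⟩
  have hSne : S.Nonempty := ⟨a, haS⟩
  have hSbdd : BddAbove S := ⟨b, fun y hy => hy.1.2⟩
  set y0 := sSup S with hy0
  have hy0a : a ≤ y0 := le_csSup hSbdd haS
  have hy0b : y0 ≤ b := csSup_le hSne fun y hy => hy.1.2
  -- y0 ∈ S
  have hy0S : y0 ∈ S := by
    rcases eq_or_lt_of_le hy0a with h | h
    · rw [← h]; exact haS
    · obtain ⟨l, hl⟩ := hf.2 y0 ⟨h, hy0b⟩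
      have hev : ∀ᶠ u in nhdsWithin y0 (Iio y0), dist (f u) l < ε / 2 :=
        hl (Metric.ball_mem_nhds l (by linarith))
      obtain ⟨w, hw, hsub⟩ := (mem_nhdsLT_iff_exists_Ioo_subset' h).1 hev
      have hz : max w a < y0 := max_lt hw h
      obtain ⟨y, hyS, hy⟩ := exists_lt_of_lt_csSup hSne hz
      have hyy0 : y ≤ y0 := le_csSup hSbdd hyS
      rcases eq_or_lt_of_le hyy0 with h' | h'
      · rw [← h']; exact hyS
      · refine ⟨⟨le_trans hy0a le_rfl, hy0b⟩, Q_ext hyS.2 h' ?_⟩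
        intro u hu v hv
        have hu' : u ∈ Ioo w y0 := ⟨lt_of_le_of_lt (le_max_left w a) (lt_of_lt_of_le hy hu.1),
          lt_of_lt_of_le hu.2 le_rfl⟩
        have hv' : v ∈ Ioo w y0 := ⟨lt_of_le_of_lt (le_max_left w a) (lt_of_lt_of_le hy hv.1),
          lt_of_lt_of_le hv.2 le_rfl⟩
        have d1 := hsub hu'
        have d2 := hsub hv'
        simp only [mem_setOf_eq, Real.dist_eq] at d1 d2
        calc |f u - f v| = |(f u - l) - (f v - l)| := by ring_nf
          _ ≤ |f u - l| + |f v - l| := abs_sub _ _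
          _ ≤ ε / 2 + ε / 2 := add_le_add d1.le d2.le
          _ = ε := by ring
  -- y0 = b
  rcases eq_or_lt_of_le hy0b with h | h
  · obtain ⟨⟨_, _⟩, K, r, h0, hK, hstr, hpc⟩ := hy0S
    exact ⟨K, r, h0, by rw [hK, h], hstr, hpc⟩
  · exfalso
    have hev : ∀ᶠ u in nhdsWithin y0 (Ioi y0), dist (f u) (f y0) < ε / 2 :=
      (hf.1 y0 ⟨hy0a, h⟩) (Metric.ball_mem_nhds _ (by linarith))
    obtain ⟨d, hd, hsub⟩ := (mem_nhdsGT_iff_exists_Ioo_subset' h).1 hev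
    set y1 := min d b with hy1
    have hy1y0 : y0 < y1 := lt_min hd h
    have hy1b : y1 ≤ b := min_le_right d b
    have : y1 ∈ S := by
      refine ⟨⟨by linarith, hy1b⟩, Q_ext hy0S.2 hy1y0 ?_⟩
      intro u hu v hv
      have key : ∀ w ∈ Ico y0 y1, |f w - f y0| ≤ ε / 2 := by
        intro w hw
        rcases eq_or_lt_of_le hw.1 with h' | h'
        · rw [← h']; simp; linarith
        · have : w ∈ Ioo y0 d := ⟨h', lt_of_lt_of_le hw.2 (min_le_left d b)⟩
          have := hsub this
          simp only [mem_setOf_eq, Real.dist_eq] at this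
          exact this.le
      calc |f u - f v| = |(f u - f y0) - (f v - f y0)| := by ring_nf
        _ ≤ |f u - f y0| + |f v - f y0| := abs_sub _ _
        _ ≤ ε / 2 + ε / 2 := add_le_add (key u hu) (key v hv)
        _ = ε := by ring
    have := le_csSup hSbdd this
    linarith



lemma seq_smono {n : ℕ} {t : ℕ → ℝ} (ht : ∀ i < n, t i < t (i + 1)) :
    ∀ {i j}, i < j → j ≤ n → t i < t j := fun {i j} hij hjn =>
  lt_of_lt_of_le (ht i (by omega)) (seq_mono ht hij hjn)

section PieceIdx
variable {a b : ℝ} {K : ℕ} {r : ℕ → ℝ}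

/-- index of the piece containing `u` -/
noncomputable def pIdx (r : ℕ → ℝ) (K : ℕ) (u : ℝ) : ℕ :=
  Nat.findGreatest (fun i => r i ≤ u) K

variable (h0 : r 0 = a) (hK : r K = b) (hstr : ∀ i < K, r i < r (i + 1))

include h0 in
lemma pIdx_le (u : ℝ) : pIdx r K u ≤ K := Nat.findGreatest_le K

include h0 in
lemma pIdx_spec {u : ℝ} (hu : a ≤ u) : r (pIdx r K u) ≤ u := by
  rcases Nat.eq_zero_or_pos (pIdx r K u) with h | h
  · rw [h, h0]; exact hu
  · exact Nat.findGreatest_of_ne_zero rfl (Nat.pos_iff_ne_zero.mp h)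

include h0 hK hstr in
lemma pIdx_lt {u : ℝ} (hab : a < b) (hu : a ≤ u) (hub : u < b) :
    pIdx r K u < K ∧ u < r (pIdx r K u + 1) := by
  have hKpos : 0 < K := by
    rcases Nat.eq_zero_or_pos K with h | h
    · exfalso; rw [h] at hK; rw [← h0, ← hK] at hab; simp at hab
    · exact h
  have h1 : pIdx r K u < K := by
    rcases Nat.lt_or_ge (pIdx r K u) K with h | h
    · exact h
    · exfalso
      have he : pIdx r K u = K := le_antisymm (Nat.findGreatest_le K) h
      have h2 := Nat.findGreatest_of_ne_zero (P := fun i => r i ≤ u) he (Nat.pos_iff_ne_zero.mp hKpos)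
      rw [hK] at h2; linarith
  refine ⟨h1, ?_⟩
  have := Nat.findGreatest_is_greatest (P := fun i => r i ≤ u) (n := K)
    (k := pIdx r K u + 1) (Nat.lt_succ_self _) (by omega)
  simpa using lt_of_not_ge this

include hK in
lemma pIdx_b : pIdx r K b = K :=
  le_antisymm (Nat.findGreatest_le K) (Nat.le_findGreatest le_rfl (le_of_eq hK))

lemma pIdx_mono {u v : ℝ} (huv : u ≤ v) : pIdx r K u ≤ pIdx r K v :=
  Nat.findGreatest_mono (fun i (hi : r i ≤ u) => le_trans hi huv) le_rfl

include hstr in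
lemma pIdx_at {i : ℕ} (hi : i ≤ K) : pIdx r K (r i) = i := by
  refine le_antisymm ?_ (Nat.le_findGreatest hi le_rfl)
  by_contra h
  have h' : i < pIdx r K (r i) := by omega
  have hle : r (pIdx r K (r i)) ≤ r i :=
    Nat.findGreatest_of_ne_zero rfl
      (Nat.pos_iff_ne_zero.mp (show 0 < pIdx r K (r i) by omega))
  have := seq_smono hstr h' (Nat.findGreatest_le K)
  linarith

include h0 hK hstr in
lemma pIdx_approx {f : ℝ → ℝ} {ε : ℝ} (hε : 0 ≤ ε) (hab : a < b)
    (hosc : ∀ i < K, ∀ u ∈ Ico (r i) (r (i+1)), ∀ v ∈ Ico (r i) (r (i+1)), |f u - f v| ≤ ε)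
    {u : ℝ} (hu : u ∈ Icc a b) : |f u - f (r (pIdx r K u))| ≤ ε := by
  rcases eq_or_lt_of_le hu.2 with h | h
  · rw [h, pIdx_b hK, hK]; simpa using hε
  · obtain ⟨h1, h2⟩ := pIdx_lt h0 hK hstr hab hu.1 h
    have hspec := pIdx_spec (K := K) h0 hu.1
    exact hosc _ h1 u ⟨hspec, h2⟩ _ ⟨le_rfl, lt_of_le_of_lt hspec h2⟩

end PieceIdx



noncomputable def jmp (x : ℕ → ℝ) (c : ℝ) (i j : ℕ) : ℝ := max (|x j - x i| - c) 0

lemma jmp_nonneg (x : ℕ → ℝ) (c : ℝ) (i j : ℕ) : 0 ≤ jmp x c i j := le_max_right _ _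

lemma jmp_self {x : ℕ → ℝ} {c : ℝ} (hc : 0 ≤ c) (i : ℕ) : jmp x c i i = 0 := by
  simp [jmp]; linarith

noncomputable def pSumL (x : ℕ → ℝ) (c : ℝ) : List ℕ → ℝ
  | [] => 0
  | [_] => 0
  | i :: j :: l => jmp x c i j + pSumL x c (j :: l)

lemma pSumL_nonneg (x : ℕ → ℝ) (c : ℝ) : ∀ l : List ℕ, 0 ≤ pSumL x c l
  | [] => le_rfl
  | [_] => le_rfl
  | i :: j :: l => add_nonneg (jmp_nonneg _ _ _ _) (pSumL_nonneg x c (j :: l))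

lemma pSumL_append (x : ℕ → ℝ) (c : ℝ) : ∀ (l : List ℕ) (h : l ≠ []) (e : ℕ),
    pSumL x c (l ++ [e]) = pSumL x c l + jmp x c (l.getLast h) e
  | [], h, e => absurd rfl h
  | [i], _, e => by simp [pSumL]
  | i :: j :: l, _, e => by
    have ih := pSumL_append x c (j :: l) (by simp) e
    show jmp x c i j + pSumL x c ((j :: l) ++ [e]) =
      jmp x c i j + pSumL x c (j :: l) + jmp x c ((j :: l).getLast (by simp)) e
    rw [ih]; ring

lemma sort_ne_nil {A : Finset ℕ} (h : A.Nonempty) : A.sort (· ≤ ·) ≠ [] := by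
  obtain ⟨z, hz⟩ := h
  intro he
  have hm : z ∈ A.sort (· ≤ ·) := (Finset.mem_sort _).2 hz
  rw [he] at hm; simp at hm

/-- sorting with a new maximal element appends it at the end -/
lemma sort_insert_max {A : Finset ℕ} {e : ℕ} (h : ∀ b ∈ A, b < e) :
    (insert e A).sort (· ≤ ·) = A.sort (· ≤ ·) ++ [e] := by
  have he : e ∉ A := fun hmem => lt_irrefl e (h e hmem)
  refine (fun hp hs => List.Perm.eq_of_pairwise' (Finset.pairwise_sort _ _) hs hp) ?_ ?_
  · have p1 : List.Perm ((insert e A).sort (· ≤ ·)) ((insert e A).toList) :=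
      Finset.sort_perm_toList _ _
    have p2 : List.Perm ((insert e A).toList) (e :: A.toList) := Finset.toList_insert he
    have p3 : List.Perm (e :: A.toList) (e :: A.sort (· ≤ ·)) :=
      List.Perm.cons e (Finset.sort_perm_toList _ _).symm
    have p4 : List.Perm (e :: A.sort (· ≤ ·)) (A.sort (· ≤ ·) ++ [e]) :=
      (List.perm_append_singleton _ _).symm
    exact ((p1.trans p2).trans p3).trans p4
  · refine List.pairwise_append.2 ⟨Finset.pairwise_sort _ _, List.pairwise_singleton _ _,
      fun p hp q hq => ?_⟩
    simp only [List.mem_singleton] at hq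
    subst hq
    exact (h p ((Finset.mem_sort _).1 hp)).le

lemma getLast_sort {A : Finset ℕ} (hA : A.Nonempty) (h : A.sort (· ≤ ·) ≠ []) :
    (A.sort (· ≤ ·)).getLast h = A.max' hA := by
  rw [List.getLast_eq_getElem]
  exact (Finset.max'_eq_sorted_last (h := hA)).symm

noncomputable def dV (x : ℕ → ℝ) (c : ℝ) (n : ℕ) : ℝ :=
  ((Finset.range (n+1)).powerset).sup' ⟨∅, Finset.empty_mem_powerset _⟩
    fun A => pSumL x c (A.sort (· ≤ ·))

lemma le_dV {x : ℕ → ℝ} {c : ℝ} {n : ℕ} {A : Finset ℕ} (hA : A ⊆ Finset.range (n+1)) :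
    pSumL x c (A.sort (· ≤ ·)) ≤ dV x c n := by
  unfold dV
  exact Finset.le_sup' (fun A => pSumL x c (A.sort (· ≤ ·))) (Finset.mem_powerset.2 hA)

lemma dV_nonneg (x : ℕ → ℝ) (c : ℝ) (n : ℕ) : 0 ≤ dV x c n := by
  have := le_dV (x := x) (c := c) (n := n) (A := ∅) (by simp)
  simpa [pSumL] using this

lemma dV_le {x : ℕ → ℝ} {c : ℝ} {n : ℕ} {X : ℝ}
    (h : ∀ A : Finset ℕ, A ⊆ Finset.range (n+1) → pSumL x c (A.sort (· ≤ ·)) ≤ X) :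
    dV x c n ≤ X :=
  Finset.sup'_le _ _ fun A hA => h A (Finset.mem_powerset.1 hA)

lemma dV_mono {x : ℕ → ℝ} {c : ℝ} {n m : ℕ} (h : n ≤ m) : dV x c n ≤ dV x c m :=
  dV_le fun A hA => le_dV (hA.trans (by intro z hz; simp at hz ⊢; omega))

lemma dV_exists (x : ℕ → ℝ) (c : ℝ) (n : ℕ) :
    ∃ A : Finset ℕ, A ⊆ Finset.range (n+1) ∧ dV x c n = pSumL x c (A.sort (· ≤ ·)) := by
  obtain ⟨A, hA, h⟩ := Finset.exists_mem_eq_sup' (s := (Finset.range (n+1)).powerset)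
    ⟨∅, Finset.empty_mem_powerset _⟩ (fun A => pSumL x c (A.sort (· ≤ ·)))
  exact ⟨A, Finset.mem_powerset.1 hA, h⟩

lemma dV_zero {x : ℕ → ℝ} {c : ℝ} : dV x c 0 = 0 := by
  refine le_antisymm (dV_le fun A hA => ?_) (dV_nonneg x c 0)
  have : A = ∅ ∨ A = {0} := by
    rw [Finset.range_one] at hA
    exact Finset.subset_singleton_iff.1 hA
  rcases this with rfl | rfl <;> simp [pSumL]

lemma dV_step {x : ℕ → ℝ} {c : ℝ} (hc : 0 ≤ c) {i j : ℕ} (hij : i ≤ j) :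
    dV x c i + jmp x c i j ≤ dV x c j := by
  rcases eq_or_lt_of_le hij with rfl | hij'
  · rw [jmp_self hc]; simp
  obtain ⟨A, hA, hAeq⟩ := dV_exists x c i
  -- B1 = insert i A has last element i and pSumL ≥ pSumL A
  set B1 := insert i A with hB1
  have hB1sub : B1 ⊆ Finset.range (i+1) := Finset.insert_subset (by simp) hA
  have hB1ne : B1.Nonempty := ⟨i, Finset.mem_insert_self i A⟩
  have hB1max : B1.max' hB1ne = i := by
    refine le_antisymm ?_ (Finset.le_max' _ _ (Finset.mem_insert_self i A))
    have h2 : B1.max' hB1ne ∈ Finset.range (i+1) := hB1sub (Finset.max'_mem B1 hB1ne)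
    exact Nat.lt_succ_iff.mp (Finset.mem_range.mp h2)
  have hB1ge : pSumL x c (A.sort (· ≤ ·)) ≤ pSumL x c (B1.sort (· ≤ ·)) := by
    by_cases hiA : i ∈ A
    · rw [hB1, Finset.insert_eq_self.2 hiA]
    · have hlt : ∀ b ∈ A, b < i := by
        intro z hz
        have := hA hz; simp at this
        exact lt_of_le_of_ne (by omega) (fun h => hiA (h ▸ hz))
      by_cases hAe : A = ∅
      · subst hAe; simp [hB1, pSumL, pSumL_nonneg]
      · rw [hB1, sort_insert_max hlt,
          pSumL_append x c _ (sort_ne_nil (Finset.nonempty_iff_ne_empty.2 hAe))]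
        exact le_add_of_nonneg_right (jmp_nonneg _ _ _ _)
  -- B2 = insert j B1
  have hltj : ∀ b ∈ B1, b < j := by
    intro z hz
    have := hB1sub hz; simp at this; omega
  have hB2 : (insert j B1).sort (· ≤ ·) = B1.sort (· ≤ ·) ++ [j] := sort_insert_max hltj
  have hB1sne : B1.sort (· ≤ ·) ≠ [] := sort_ne_nil hB1ne
  have key : pSumL x c ((insert j B1).sort (· ≤ ·)) =
      pSumL x c (B1.sort (· ≤ ·)) + jmp x c i j := by
    rw [hB2, pSumL_append x c _ hB1sne, getLast_sort hB1ne, hB1max]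
  have hsub : insert j B1 ⊆ Finset.range (j+1) := by
    refine Finset.insert_subset (by simp) (hB1sub.trans ?_)
    intro z hz; simp at hz ⊢; omega
  calc dV x c i + jmp x c i j = pSumL x c (A.sort (· ≤ ·)) + jmp x c i j := by rw [hAeq]
    _ ≤ pSumL x c (B1.sort (· ≤ ·)) + jmp x c i j := by linarith
    _ = pSumL x c ((insert j B1).sort (· ≤ ·)) := key.symm
    _ ≤ dV x c j := le_dV hsub

lemma dV_rec {x : ℕ → ℝ} {c : ℝ} (n : ℕ) :
    dV x c (n+1) ≤ dV x c n ∨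
      ∃ i ≤ n, dV x c (n+1) ≤ dV x c i + jmp x c i (n+1) := by
  obtain ⟨A, hA, hAeq⟩ := dV_exists x c (n+1)
  by_cases hmem : n + 1 ∈ A
  · set A' := A.erase (n+1) with hA'
    have hAin : A = insert (n+1) A' := by
      rw [hA', Finset.insert_erase hmem]
    have hlt : ∀ b ∈ A', b < n + 1 := by
      intro z hz
      have h1 := Finset.mem_of_mem_erase hz
      have h2 := Finset.ne_of_mem_erase hz
      have := hA h1; simp at this; omega
    by_cases hAe : A' = ∅
    · left
      rw [hAeq, hAin, hAe]
      simpa [pSumL] using dV_nonneg x c n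
    · right
      have hA'ne : A'.Nonempty := Finset.nonempty_iff_ne_empty.2 hAe
      set i := A'.max' hA'ne with hi
      have hiA' : i ∈ A' := Finset.max'_mem _ _
      have hile : i ≤ n := by have := hlt i hiA'; omega
      refine ⟨i, hile, ?_⟩
      have hA'sub : A' ⊆ Finset.range (i+1) := by
        intro z hz
        simp only [Finset.mem_range]
        have := Finset.le_max' A' z hz
        omega
      have hsne : A'.sort (· ≤ ·) ≠ [] := sort_ne_nil hA'ne
      rw [hAeq, hAin, sort_insert_max hlt, pSumL_append x c _ hsne, getLast_sort hA'ne]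
      exact add_le_add_left (le_dV hA'sub) _
  · left
    rw [hAeq]
    refine le_dV ?_
    intro z hz
    have := hA hz; simp at this ⊢
    rcases Nat.lt_or_ge z (n+1) with h | h
    · omega
    · exfalso; have : z = n + 1 := by omega
      exact hmem (this ▸ hz)

lemma dV_eq_zero {x : ℕ → ℝ} {c : ℝ} {N : ℕ}
    (h : ∀ p ≤ N, ∀ q ≤ N, |x p - x q| ≤ c) : ∀ n ≤ N, dV x c n = 0 := by
  intro n
  induction n using Nat.strong_induction_on with
  | _ n ih =>
    intro hn
    match n, hn with
    | 0, _ => exact dV_zero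
    | (k+1), hn =>
      refine le_antisymm ?_ (dV_nonneg _ _ _)
      rcases dV_rec (x := x) (c := c) k with h1 | ⟨i, hi, h1⟩
      · rw [ih k (by omega) (by omega)] at h1; exact h1
      · have h2 : jmp x c i (k+1) = 0 := by
          have h3 := h (k+1) (by omega) i (by omega)
          simp only [jmp, max_eq_right_iff]
          linarith
        rw [ih i (by omega) (by omega), h2] at h1
        simpa using h1

lemma dV_chain {x : ℕ → ℝ} {c : ℝ} (hc : 0 ≤ c) (p : ℕ → ℕ) :
    ∀ n, (∀ i < n, p i ≤ p (i+1)) →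
      ∑ i ∈ Finset.range n, jmp x c (p i) (p (i+1)) ≤ dV x c (p n) := by
  intro n
  induction n with
  | zero => intro _; simpa using dV_nonneg x c (p 0)
  | succ k ih =>
    intro hp
    rw [Finset.sum_range_succ]
    calc (∑ i ∈ Finset.range k, jmp x c (p i) (p (i+1))) + jmp x c (p k) (p (k+1))
        ≤ dV x c (p k) + jmp x c (p k) (p (k+1)) :=
          add_le_add_left (ih fun i hi => hp i (by omega)) _
      _ ≤ dV x c (p (k+1)) := dV_step hc (hp k (by omega))

noncomputable def oscX (x : ℕ → ℝ) (K : ℕ) : ℝ :=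
  (Finset.range (K+1)).sup' (Finset.nonempty_range_iff.mpr (Nat.succ_ne_zero K)) x -
    (Finset.range (K+1)).inf' (Finset.nonempty_range_iff.mpr (Nat.succ_ne_zero K)) x

lemma sub_le_oscX {x : ℕ → ℝ} {K p q : ℕ} (hp : p ≤ K) (hq : q ≤ K) :
    x p - x q ≤ oscX x K :=
  sub_le_sub (Finset.le_sup' x (Finset.mem_range.2 (by omega)))
    (Finset.inf'_le x (Finset.mem_range.2 (by omega)))

lemma abs_le_oscX {x : ℕ → ℝ} {K p q : ℕ} (hp : p ≤ K) (hq : q ≤ K) :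
    |x p - x q| ≤ oscX x K :=
  abs_sub_le_iff.2 ⟨sub_le_oscX hp hq, sub_le_oscX hq hp⟩

lemma oscX_nonneg (x : ℕ → ℝ) (K : ℕ) : 0 ≤ oscX x K := by
  have := sub_le_oscX (x := x) (K := K) (p := 0) (q := 0) (by omega) (by omega)
  simpa using this

/-- The discrete pinning lemma (discrete Lemma A). -/
lemma dla (x : ℕ → ℝ) {c : ℝ} (hc : 0 < c) :
    ∀ K, ∀ m ≤ K, ∃ i ≤ K, ∃ j ≤ K,
      min (oscX x K) c ≤
        x i - x j - |dV x c i - dV x c m| - |dV x c j - dV x c m| := by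
  intro K
  induction K with
  | zero =>
    intro m hm
    interval_cases m
    refine ⟨0, le_rfl, 0, le_rfl, ?_⟩
    have h1 : oscX x 0 = 0 := by simp [oscX]
    rw [h1, min_eq_left hc.le]
    simp
  | succ K ih =>
    intro m hm
    by_cases hosc : oscX x (K+1) ≤ c
    · -- all of dV vanishes; use the extreme pair
      obtain ⟨p, hp, hps⟩ := Finset.exists_mem_eq_sup'
        (Finset.nonempty_range_iff.mpr (Nat.succ_ne_zero (K+1))) x
      obtain ⟨q, hq, hqs⟩ := Finset.exists_mem_eq_inf'
        (Finset.nonempty_range_iff.mpr (Nat.succ_ne_zero (K+1))) x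
      have hp' : p ≤ K + 1 := by have := Finset.mem_range.1 hp; omega
      have hq' : q ≤ K + 1 := by have := Finset.mem_range.1 hq; omega
      have hz : ∀ j ≤ K+1, dV x c j = 0 :=
        dV_eq_zero (fun p2 hp2 q2 hq2 => le_trans (abs_le_oscX hp2 hq2) hosc)
      refine ⟨p, hp', q, hq', ?_⟩
      rw [hz p hp', hz q hq', hz m hm]
      simp only [sub_zero, sub_self, abs_zero]
      calc min (oscX x (K+1)) c ≤ oscX x (K+1) := min_le_left _ _
        _ = x p - x q := by rw [oscX, hps, hqs]
    · push_neg at hosc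
      rw [min_eq_right hosc.le]
      by_cases hpre : oscX x K ≤ c
      · -- Case 2 : flat prefix, the new point creates the oscillation
        have hz : ∀ j ≤ K, dV x c j = 0 :=
          dV_eq_zero (fun p2 hp2 q2 hq2 => le_trans (abs_le_oscX hp2 hq2) hpre)
        obtain ⟨p, hp, hps⟩ := Finset.exists_mem_eq_sup'
          (Finset.nonempty_range_iff.mpr (Nat.succ_ne_zero (K+1))) x
        obtain ⟨q, hq, hqs⟩ := Finset.exists_mem_eq_inf'
          (Finset.nonempty_range_iff.mpr (Nat.succ_ne_zero (K+1))) x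
        have hp' : p ≤ K + 1 := by have := Finset.mem_range.1 hp; omega
        have hq' : q ≤ K + 1 := by have := Finset.mem_range.1 hq; omega
        have hpq : x p - x q = oscX x (K+1) := by rw [oscX, hps, hqs]
        have hone : (p = K+1 ∧ q ≤ K) ∨ (q = K+1 ∧ p ≤ K) := by
          rcases Nat.lt_or_ge p (K+1) with h1 | h1
          · rcases Nat.lt_or_ge q (K+1) with h2 | h2
            · exfalso
              have := sub_le_oscX (x := x) (K := K) (p := p) (q := q) (by omega) (by omega)
              linarith
            · right; constructor; omega; omega
          · left; constructor; omega
            rcases Nat.lt_or_ge q (K+1) with h2 | h2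
            · omega
            · exfalso
              have hq1 : q = K + 1 := by omega
              have hp1 : p = K + 1 := by omega
              rw [hp1, hq1] at hpq
              simp at hpq
              linarith [hpq, hosc]
        have hoscpos : 0 < oscX x (K+1) - c := by linarith
        have hdv : dV x c (K+1) = oscX x (K+1) - c := by
          refine le_antisymm ?_ ?_
          · rcases dV_rec (x := x) (c := c) K with h1 | ⟨i, hi, h1⟩
            · rw [hz K le_rfl] at h1; linarith
            · rw [hz i hi] at h1
              have hj : jmp x c i (K+1) ≤ oscX x (K+1) - c := by
                have hb := abs_le_oscX (x := x) (p := K+1) (q := i) le_rfl (by omega)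
                rw [jmp]
                refine max_le (by linarith) (by linarith)
              linarith
          · rcases hone with ⟨hpK, hqK⟩ | ⟨hqK, hpK⟩
            · have hst := dV_step (x := x) hc.le (show q ≤ K+1 by omega)
              rw [hz q hqK] at hst
              have hj : jmp x c q (K+1) = oscX x (K+1) - c := by
                have hx : x (K+1) = x p := by rw [hpK]
                rw [jmp, hx,
                  abs_of_nonneg (by linarith [oscX_nonneg x (K+1)] : (0:ℝ) ≤ x p - x q), hpq]
                exact max_eq_left hoscpos.le
              rw [hj] at hst; linarith
            · have hst := dV_step (x := x) hc.le (show p ≤ K+1 by omega)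
              rw [hz p hpK] at hst
              have hj : jmp x c p (K+1) = oscX x (K+1) - c := by
                have hx : x (K+1) = x q := by rw [hqK]
                rw [jmp, hx, abs_sub_comm,
                  abs_of_nonneg (by linarith [oscX_nonneg x (K+1)] : (0:ℝ) ≤ x p - x q), hpq]
                exact max_eq_left hoscpos.le
              rw [hj] at hst; linarith
        -- now the pair (p, q) works for every m
        refine ⟨p, hp', q, hq', ?_⟩
        have hcost : |dV x c p - dV x c m| + |dV x c q - dV x c m| = oscX x (K+1) - c := by
          rcases hone with ⟨hpK, hqK⟩ | ⟨hqK, hpK⟩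
          · rw [hpK, hdv, hz q hqK]
            rcases Nat.lt_or_ge m (K+1) with h2 | h2
            · rw [hz m (by omega)]
              rw [sub_zero, sub_zero, abs_of_nonneg hoscpos.le, abs_zero]; ring
            · have : m = K + 1 := by omega
              rw [this, hdv]
              rw [sub_self, abs_zero, zero_sub, abs_neg, abs_of_nonneg hoscpos.le]; ring
          · rw [hqK, hdv, hz p hpK]
            rcases Nat.lt_or_ge m (K+1) with h2 | h2
            · rw [hz m (by omega)]
              rw [sub_zero, sub_zero, abs_of_nonneg hoscpos.le, abs_zero]; ring
            · have : m = K + 1 := by omega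
              rw [this, hdv]
              rw [sub_self, abs_zero, zero_sub, abs_neg, abs_of_nonneg hoscpos.le]; ring
        linarith [hcost, hpq]
      · -- Case 1 : the prefix already oscillates by more than c
        push_neg at hpre
        by_cases hm' : m ≤ K
        · obtain ⟨i, hi, j, hj, hij⟩ := ih m hm'
          rw [min_eq_right hpre.le] at hij
          exact ⟨i, by omega, j, by omega, hij⟩
        · have hmK : m = K+1 := by omega
          subst hmK
          by_cases hdel : dV x c (K+1) ≤ dV x c K
          · have heq : dV x c (K+1) = dV x c K := le_antisymm hdel (dV_mono (by omega))
            obtain ⟨i, hi, j, hj, hij⟩ := ih K le_rfl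
            rw [min_eq_right hpre.le, ← heq] at hij
            exact ⟨i, by omega, j, by omega, hij⟩
          · push_neg at hdel
            rcases dV_rec (x := x) (c := c) K with h1 | ⟨i0, hi0, h1⟩
            · linarith
            · have h2 : dV x c i0 + jmp x c i0 (K+1) ≤ dV x c (K+1) :=
                dV_step hc.le (by omega)
              have hEq : dV x c (K+1) = dV x c i0 + jmp x c i0 (K+1) := le_antisymm h1 h2
              have hjpos : 0 < jmp x c i0 (K+1) := by
                have := dV_mono (x := x) (c := c) hi0
                linarith
              have hjval : jmp x c i0 (K+1) = |x (K+1) - x i0| - c := by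
                rw [jmp]
                rcases le_or_gt (|x (K+1) - x i0| - c) 0 with h | h
                · exfalso
                  rw [jmp, max_eq_right h] at hjpos
                  exact lt_irrefl 0 hjpos
                · exact max_eq_left h.le
              have hcost : |dV x c i0 - dV x c (K+1)| = |x (K+1) - x i0| - c := by
                rw [hEq, hjval]
                have : dV x c i0 - (dV x c i0 + (|x (K+1) - x i0| - c)) =
                    -(|x (K+1) - x i0| - c) := by ring
                rw [this, abs_neg, abs_of_nonneg (by linarith)]
              rcases abs_cases (x (K+1) - x i0) with ⟨ha, _⟩ | ⟨ha, _⟩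
              · refine ⟨K+1, le_rfl, i0, by omega, ?_⟩
                rw [sub_self, abs_zero, hcost]
                linarith
              · refine ⟨i0, by omega, K+1, le_rfl, ?_⟩
                rw [sub_self, abs_zero, hcost]
                have : |x (K+1) - x i0| = -(x (K+1) - x i0) := by
                  rcases abs_cases (x (K+1) - x i0) with ⟨h3, h4⟩ | ⟨h3, _⟩
                  · rw [h3]; linarith
                  · exact h3
                linarith


section Main

variable {a b c : ℝ} {f : ℝ → ℝ}

lemma ofReal_eq_ofReal_max (y : ℝ) : ENNReal.ofReal y = ENNReal.ofReal (max y 0) := by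
  rcases le_or_gt y 0 with h | h
  · rw [ENNReal.ofReal_of_nonpos h, max_eq_right h, ENNReal.ofReal_zero]
  · rw [max_eq_left h.le]

/-- Key upper bound for the truncated variation via a fine and a coarse partition. -/
lemma keyBound (hab : a < b) (hc : 0 < c)
    {K : ℕ} {r : ℕ → ℝ} {ε : ℝ} (hε : 0 < ε) (hε16 : ε ≤ c/16)
    (h0 : r 0 = a) (hK : r K = b) (hstr : ∀ i < K, r i < r (i + 1))
    (hosc : ∀ i < K, ∀ u ∈ Ico (r i) (r (i+1)), ∀ v ∈ Ico (r i) (r (i+1)), |f u - f v| ≤ ε)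
    {K0 : ℕ} {ρ : ℕ → ℝ}
    (g0 : ρ 0 = a) (gK : ρ K0 = b) (gstr : ∀ i < K0, ρ i < ρ (i + 1))
    (gosc : ∀ i < K0, ∀ u ∈ Ico (ρ i) (ρ (i+1)), ∀ v ∈ Ico (ρ i) (ρ (i+1)), |f u - f v| ≤ c/8)
    {s : ℝ} (hs : s ∈ Icc a b) :
    TVc f c a s ≤ ENNReal.ofReal (dV (fun i => f (r i)) c (pIdx r K s) + 2*ε*K0) := by
  set x : ℕ → ℝ := fun i => f (r i) with hx
  refine TVc_le fun n t ht => ?_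
  have hmem : ∀ i ≤ n, t i ∈ Icc a b := fun i hi =>
    ⟨(isPart_mem ht hi).1, le_trans (isPart_mem ht hi).2 hs.2⟩
  -- termwise real bound
  have hterm : ∀ i < n, dist (f (t (i+1))) (f (t i)) - c ≤
      jmp x c (pIdx r K (t i)) (pIdx r K (t (i+1))) +
        2*ε*((pIdx ρ K0 (t (i+1)) : ℝ) - (pIdx ρ K0 (t i) : ℝ)) := by
    intro i hi
    have hui : t i ∈ Icc a b := hmem i (by omega)
    have hvi : t (i+1) ∈ Icc a b := hmem (i+1) (by omega)
    have huv : t i ≤ t (i+1) := (ht.2.2 i hi).le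
    have hPm : pIdx ρ K0 (t i) ≤ pIdx ρ K0 (t (i+1)) := pIdx_mono huv
    rcases eq_or_lt_of_le hPm with hP | hP
    · -- same coarse piece : increment at most c/8
      have hsmall : |f (t (i+1)) - f (t i)| ≤ c/8 := by
        rcases eq_or_lt_of_le hvi.2 with hb' | hb'
        · -- t (i+1) = b
          have h1 : pIdx ρ K0 (t (i+1)) = K0 := by rw [hb']; exact pIdx_b gK
          rcases eq_or_lt_of_le hui.2 with hb2 | hb2
          · rw [hb', hb2]; simp; linarith
          · exfalso
            have := (pIdx_lt g0 gK gstr hab hui.1 hb2).1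
            omega
        · have h2 := pIdx_lt g0 gK gstr hab hui.1 (lt_of_le_of_lt huv hb')
          have h3 := pIdx_lt g0 gK gstr hab hvi.1 hb'
          have hs1 := pIdx_spec (K := K0) g0 hui.1
          have hs2 := pIdx_spec (K := K0) g0 hvi.1
          refine gosc _ h3.1 (t (i+1)) ⟨hs2, h3.2⟩ (t i) ⟨?_, ?_⟩
          · rw [hP] at hs1; exact hs1
          · have h22 := h2.2; rw [hP] at h22; exact h22
      have : dist (f (t (i+1))) (f (t i)) - c ≤ 0 := by
        rw [Real.dist_eq]; linarith
      rw [← hP]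
      have hj := jmp_nonneg x c (pIdx r K (t i)) (pIdx r K (t (i+1)))
      have h9 : 2*ε*((pIdx ρ K0 (t i) : ℝ) - (pIdx ρ K0 (t i) : ℝ)) = 0 := by ring
      rw [h9]
      linarith
    · -- coarse piece advances : pay 2ε
      have hB : (2:ℝ)*ε ≤ 2*ε*((pIdx ρ K0 (t (i+1)) : ℝ) - (pIdx ρ K0 (t i) : ℝ)) := by
        have h1 : (1:ℝ) ≤ (pIdx ρ K0 (t (i+1)) : ℝ) - (pIdx ρ K0 (t i) : ℝ) := by
          have : pIdx ρ K0 (t i) + 1 ≤ pIdx ρ K0 (t (i+1)) := hP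
          have := Nat.cast_le (α := ℝ).2 this
          push_cast at this ⊢
          linarith
        nlinarith
      have ha1 : |f (t i) - x (pIdx r K (t i))| ≤ ε :=
        pIdx_approx h0 hK hstr hε.le hab hosc hui
      have ha2 : |f (t (i+1)) - x (pIdx r K (t (i+1)))| ≤ ε :=
        pIdx_approx h0 hK hstr hε.le hab hosc hvi
      have habs : |f (t (i+1)) - f (t i)| ≤
          |x (pIdx r K (t (i+1))) - x (pIdx r K (t i))| + 2*ε := by
        have h5 : f (t (i+1)) - f (t i) =
            (x (pIdx r K (t (i+1))) - x (pIdx r K (t i)))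
            + (f (t (i+1)) - x (pIdx r K (t (i+1)))) - (f (t i) - x (pIdx r K (t i))) := by
          ring
        calc |f (t (i+1)) - f (t i)| ≤
            |x (pIdx r K (t (i+1))) - x (pIdx r K (t i))|
              + |f (t (i+1)) - x (pIdx r K (t (i+1)))| + |f (t i) - x (pIdx r K (t i))| := by
              rw [h5]
              refine le_trans (abs_sub _ _) ?_
              gcongr
              exact abs_add_le _ _
          _ ≤ _ := by linarith
      have hjle : |x (pIdx r K (t (i+1))) - x (pIdx r K (t i))| - c ≤
          jmp x c (pIdx r K (t i)) (pIdx r K (t (i+1))) := le_max_left _ _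
      rw [Real.dist_eq]
      linarith
  -- sum bound
  have hsum : (∑ i ∈ Finset.range n, max (dist (f (t (i+1))) (f (t i)) - c) 0) ≤
      dV x c (pIdx r K s) + 2*ε*K0 := by
    have h1 : ∀ i ∈ Finset.range n, max (dist (f (t (i+1))) (f (t i)) - c) 0 ≤
        jmp x c (pIdx r K (t i)) (pIdx r K (t (i+1))) +
          2*ε*((pIdx ρ K0 (t (i+1)) : ℝ) - (pIdx ρ K0 (t i) : ℝ)) := by
      intro i hi
      have hi' := Finset.mem_range.1 hi
      refine max_le (hterm i hi') ?_
      have := jmp_nonneg x c (pIdx r K (t i)) (pIdx r K (t (i+1)))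
      have hB : (0:ℝ) ≤ 2*ε*((pIdx ρ K0 (t (i+1)) : ℝ) - (pIdx ρ K0 (t i) : ℝ)) := by
        have h2 : pIdx ρ K0 (t i) ≤ pIdx ρ K0 (t (i+1)) := pIdx_mono (ht.2.2 i hi').le
        have := Nat.cast_le (α := ℝ).2 h2
        nlinarith
      linarith
    calc (∑ i ∈ Finset.range n, max (dist (f (t (i+1))) (f (t i)) - c) 0)
        ≤ ∑ i ∈ Finset.range n, (jmp x c (pIdx r K (t i)) (pIdx r K (t (i+1))) +
            2*ε*((pIdx ρ K0 (t (i+1)) : ℝ) - (pIdx ρ K0 (t i) : ℝ))) :=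
          Finset.sum_le_sum h1
      _ = (∑ i ∈ Finset.range n, jmp x c (pIdx r K (t i)) (pIdx r K (t (i+1)))) +
            2*ε*((pIdx ρ K0 (t n) : ℝ) - (pIdx ρ K0 (t 0) : ℝ)) := by
          rw [Finset.sum_add_distrib]
          congr 1
          rw [← Finset.mul_sum]
          congr 1
          exact Finset.sum_range_sub (fun i => (pIdx ρ K0 (t i) : ℝ)) n
      _ ≤ dV x c (pIdx r K s) + 2*ε*K0 := by
          gcongr
          · calc (∑ i ∈ Finset.range n, jmp x c (pIdx r K (t i)) (pIdx r K (t (i+1))))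
                ≤ dV x c (pIdx r K (t n)) :=
                  dV_chain hc.le _ n (fun i hi => pIdx_mono (ht.2.2 i hi).le)
              _ ≤ dV x c (pIdx r K s) := dV_mono (pIdx_mono ht.2.1)
          · have h2 : pIdx ρ K0 (t n) ≤ K0 := pIdx_le (K := K0) g0 (t n)
            have h3 : (0:ℝ) ≤ (pIdx ρ K0 (t 0) : ℝ) := Nat.cast_nonneg _
            have := Nat.cast_le (α := ℝ).2 h2
            nlinarith
  -- ENNReal conclusion
  calc psum f c n t = ∑ i ∈ Finset.range n,
        ENNReal.ofReal (max (dist (f (t (i+1))) (f (t i)) - c) 0) := by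
        exact Finset.sum_congr rfl fun i _ => ofReal_eq_ofReal_max _
    _ = ENNReal.ofReal (∑ i ∈ Finset.range n, max (dist (f (t (i+1))) (f (t i)) - c) 0) :=
        (ENNReal.ofReal_sum_of_nonneg fun i _ => le_max_right _ _).symm
    _ ≤ _ := ENNReal.ofReal_le_ofReal hsum

lemma TVc_ne_top (hab : a < b) (hc : 0 < c) (hf : Cadlag f a b) {s : ℝ} (hsb : s ≤ b) :
    TVc f c a s ≠ ⊤ := by
  obtain ⟨K, r, h0, hK, hstr, hosc⟩ := exists_osc_partition hab hf
    (show (0:ℝ) < c/16 by linarith)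
  have hb := keyBound hab hc (show (0:ℝ) < c/16 by linarith) le_rfl h0 hK hstr hosc h0 hK hstr
      (fun i hi u hu v hv => le_trans (hosc i hi u hu v hv) (by linarith))
      (s := b) ⟨hab.le, le_rfl⟩
  intro htop
  have h2 : TVc f c a s ≤ TVc f c a b := TVc_mono f c a hsb
  rw [htop, top_le_iff] at h2
  rw [h2] at hb
  exact (lt_irrefl _ (lt_of_le_of_lt hb ENNReal.ofReal_lt_top)).elim

/-- the (real-valued) truncated variation function -/
noncomputable def rV (f : ℝ → ℝ) (c a : ℝ) (s : ℝ) : ℝ := (TVc f c a s).toReal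

lemma rV_nonneg : 0 ≤ rV f c a s := ENNReal.toReal_nonneg

lemma rV_a : rV f c a a = 0 := by rw [rV, TVc_self]; rfl

lemma rV_mono (hne : TVc f c a b ≠ ⊤) {s u : ℝ} (hsu : s ≤ u) (hub : u ≤ b) :
    rV f c a s ≤ rV f c a u :=
  ENNReal.toReal_mono (ne_top_of_le_ne_top hne (TVc_mono f c a hub)) (TVc_mono f c a hsu)

lemma TVc_eq_ofReal_rV (hne : TVc f c a b ≠ ⊤) {s : ℝ} (hsb : s ≤ b) :
    TVc f c a s = ENNReal.ofReal (rV f c a s) :=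
  (ENNReal.ofReal_toReal (ne_top_of_le_ne_top hne (TVc_mono f c a hsb))).symm

lemma T3r (hne : TVc f c a b ≠ ⊤) (hcc : 0 ≤ c) {s u : ℝ}
    (has : a ≤ s) (hsu : s ≤ u) (hub : u ≤ b) :
    rV f c a s + max (|f u - f s| - c) 0 ≤ rV f c a u := by
  have h := TVc_append f (cc := c) hcc has hsu
  have hne1 : TVc f c a s ≠ ⊤ := ne_top_of_le_ne_top hne (TVc_mono f c a (le_trans hsu hub))
  have hne2 : TVc f c a u ≠ ⊤ := ne_top_of_le_ne_top hne (TVc_mono f c a hub)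
  have h2 := ENNReal.toReal_mono hne2 h
  rw [ENNReal.toReal_add hne1 ENNReal.ofReal_ne_top] at h2
  rw [ofReal_eq_ofReal_max, ENNReal.toReal_ofReal (le_max_right _ _)] at h2
  rw [Real.dist_eq] at h2
  exact h2

lemma LemBr (hne : TVc f c a b ≠ ⊤) (hcc : 0 ≤ c) {u v : ℝ}
    (hu : u ∈ Icc a b) (hv : v ∈ Icc a b) :
    |f u - f v| - c ≤ |rV f c a u - rV f c a v| := by
  rcases le_total u v with h | h
  · have := T3r hne hcc hu.1 h hv.2
    have h2 : rV f c a v - rV f c a u ≤ |rV f c a u - rV f c a v| := by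
      rw [abs_sub_comm]; exact le_abs_self _
    have h3 : |f u - f v| = |f v - f u| := abs_sub_comm _ _
    have h4 : |f v - f u| - c ≤ max (|f v - f u| - c) 0 := le_max_left _ _
    linarith
  · have := T3r hne hcc hv.1 h hu.2
    have h2 : rV f c a u - rV f c a v ≤ |rV f c a u - rV f c a v| := le_abs_self _
    have h4 : |f u - f v| - c ≤ max (|f u - f v| - c) 0 := le_max_left _ _
    linarith

lemma dV_le_rV (hc : 0 < c) (hne : TVc f c a b ≠ ⊤)
    {K : ℕ} {r : ℕ → ℝ}
    (h0 : r 0 = a) (hK : r K = b) (hstr : ∀ i < K, r i < r (i + 1)) :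
    ∀ m ≤ K, dV (fun i => f (r i)) c m ≤ rV f c a (r m) := by
  intro m
  induction m using Nat.strong_induction_on with
  | _ m ih =>
    intro hm
    match m, hm with
    | 0, _ =>
      rw [h0, rV_a, dV_zero]
    | (k+1), hm =>
      have hrb : r (k+1) ≤ b := by rw [← hK]; exact seq_mono hstr hm le_rfl
      have hra : a ≤ r (k+1) := by rw [← h0]; exact seq_mono hstr (Nat.zero_le _) hm
      rcases dV_rec (x := fun i => f (r i)) (c := c) k with h1 | ⟨i, hi, h1⟩
      · refine le_trans h1 (le_trans (ih k (by omega) (by omega)) ?_)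
        exact rV_mono hne (seq_mono hstr (by omega) hm) hrb
      · have hria : a ≤ r i := by rw [← h0]; exact seq_mono hstr (Nat.zero_le _) (by omega)
        have hjeq : jmp (fun i => f (r i)) c i (k+1) = max (|f (r (k+1)) - f (r i)| - c) 0 := rfl
        calc dV (fun i => f (r i)) c (k+1)
            ≤ dV (fun i => f (r i)) c i + jmp (fun i => f (r i)) c i (k+1) := h1
          _ ≤ rV f c a (r i) + max (|f (r (k+1)) - f (r i)| - c) 0 := by
              rw [hjeq]; exact add_le_add_left (ih i (by omega) (by omega)) _
          _ ≤ rV f c a (r (k+1)) :=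
              T3r hne hc.le hria (seq_mono hstr (by omega) hm) hrb

lemma rV_cmp (hab : a < b) (hc : 0 < c) (hne : TVc f c a b ≠ ⊤)
    {K : ℕ} {r : ℕ → ℝ} {ε : ℝ} (hε : 0 < ε) (hε16 : ε ≤ c/16)
    (h0 : r 0 = a) (hK : r K = b) (hstr : ∀ i < K, r i < r (i + 1))
    (hosc : ∀ i < K, ∀ u ∈ Ico (r i) (r (i+1)), ∀ v ∈ Ico (r i) (r (i+1)), |f u - f v| ≤ ε)
    {K0 : ℕ} {ρ : ℕ → ℝ}
    (g0 : ρ 0 = a) (gK : ρ K0 = b) (gstr : ∀ i < K0, ρ i < ρ (i + 1))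
    (gosc : ∀ i < K0, ∀ u ∈ Ico (ρ i) (ρ (i+1)), ∀ v ∈ Ico (ρ i) (ρ (i+1)), |f u - f v| ≤ c/8)
    {s : ℝ} (hs : s ∈ Icc a b) :
    dV (fun i => f (r i)) c (pIdx r K s) ≤ rV f c a s ∧
      rV f c a s ≤ dV (fun i => f (r i)) c (pIdx r K s) + 2*ε*K0 := by
  constructor
  · refine le_trans (dV_le_rV hc hne h0 hK hstr _ (pIdx_le (K := K) h0 s)) ?_
    exact rV_mono hne (pIdx_spec (K := K) h0 hs.1) hs.2
  · have hkb := keyBound hab hc hε hε16 h0 hK hstr hosc g0 gK gstr gosc hs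
    have h2 := ENNReal.toReal_mono ENNReal.ofReal_ne_top hkb
    have hnn : (0:ℝ) ≤ dV (fun i => f (r i)) c (pIdx r K s) + 2*ε*K0 :=
      add_nonneg (dV_nonneg _ _ _) (by positivity)
    rw [ENNReal.toReal_ofReal hnn] at h2
    exact h2

lemma lemA (hab : a < b) (hc : 0 < c) (hf : Cadlag f a b)
    (hcosc : c ≤ sSup {y : ℝ | ∃ s ∈ Icc a b, ∃ u ∈ Icc a b, y = |f s - f u|})
    (hne : TVc f c a b ≠ ⊤)
    {t0 : ℝ} (ht0 : t0 ∈ Icc a b) {η : ℝ} (hη : 0 < η) :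
    ∃ u ∈ Icc a b, ∃ v ∈ Icc a b,
      c - η ≤ f u - f v - |rV f c a u - rV f c a t0| - |rV f c a v - rV f c a t0| := by
  obtain ⟨K0, ρ, g0, gK, gstr, gosc⟩ := exists_osc_partition hab hf
    (show (0:ℝ) < c/8 by linarith)
  set D : ℝ := 8*(K0:ℝ) + 4 with hD
  have hDpos : 0 < D := by positivity
  set ε : ℝ := min (c/16) (η / D) with hε
  have hεpos : 0 < ε := lt_min (by linarith) (by positivity)
  have hε16 : ε ≤ c/16 := min_le_left _ _
  have hεη : ε * (8*(K0:ℝ) + 3) ≤ η := by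
    have h1 : ε ≤ η / D := min_le_right _ _
    have h2 : ε * D ≤ η := by
      rw [← le_div_iff₀ hDpos] at *; exact h1
    nlinarith [hεpos.le]
  obtain ⟨K, r, h0, hK, hstr, hosc⟩ := exists_osc_partition hab hf hεpos
  set x : ℕ → ℝ := fun i => f (r i) with hx
  set m := pIdx r K t0 with hm
  -- certificates for the oscillation
  have hSne : ({y : ℝ | ∃ s ∈ Icc a b, ∃ u ∈ Icc a b, y = |f s - f u|}).Nonempty :=
    ⟨0, a, ⟨le_rfl, hab.le⟩, a, ⟨le_rfl, hab.le⟩, by simp⟩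
  obtain ⟨y, hy, hylt⟩ := exists_lt_of_lt_csSup hSne
    (show c - ε < sSup {y : ℝ | ∃ s ∈ Icc a b, ∃ u ∈ Icc a b, y = |f s - f u|} from
      lt_of_lt_of_le (by linarith) hcosc)
  obtain ⟨s0, hs0, u0, hu0, rfl⟩ := hy
  have ha1 : |f s0 - x (pIdx r K s0)| ≤ ε := pIdx_approx h0 hK hstr hεpos.le hab hosc hs0
  have ha2 : |f u0 - x (pIdx r K u0)| ≤ ε := pIdx_approx h0 hK hstr hεpos.le hab hosc hu0
  have hoscX : c - 3*ε ≤ oscX x K := by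
    have h5 : |f s0 - f u0| ≤ |x (pIdx r K s0) - x (pIdx r K u0)| + 2*ε := by
      have he : f s0 - f u0 = (x (pIdx r K s0) - x (pIdx r K u0))
          + (f s0 - x (pIdx r K s0)) - (f u0 - x (pIdx r K u0)) := by ring
      calc |f s0 - f u0| ≤ |x (pIdx r K s0) - x (pIdx r K u0)|
            + |f s0 - x (pIdx r K s0)| + |f u0 - x (pIdx r K u0)| := by
            rw [he]
            refine le_trans (abs_sub _ _) ?_
            gcongr
            exact abs_add_le _ _
        _ ≤ _ := by linarith
    have h6 : |x (pIdx r K s0) - x (pIdx r K u0)| ≤ oscX x K :=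
      abs_le_oscX (pIdx_le (K := K) h0 s0) (pIdx_le (K := K) h0 u0)
    linarith
  -- discrete pinning
  obtain ⟨i, hiK, j, hjK, hij⟩ := dla x hc K m (pIdx_le (K := K) h0 t0)
  have hmin : c - 3*ε ≤ min (oscX x K) c := le_min hoscX (by linarith)
  -- cost transfer
  have hcm : |rV f c a t0 - dV x c m| ≤ 2*ε*K0 := by
    obtain ⟨hl, hu⟩ := rV_cmp hab hc hne hεpos hε16 h0 hK hstr hosc g0 gK gstr gosc ht0
    have h00 : (0:ℝ) ≤ 2*ε*K0 := by positivity
    rw [abs_le]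
    constructor <;> linarith
  have hci : ∀ i2, i2 ≤ K → |rV f c a (r i2) - dV x c i2| ≤ 2*ε*K0 := by
    intro i2 hi2
    have hri : r i2 ∈ Icc a b := by
      constructor
      · rw [← h0]; exact seq_mono hstr (Nat.zero_le _) hi2
      · rw [← hK]; exact seq_mono hstr hi2 le_rfl
    obtain ⟨hl, hu⟩ := rV_cmp hab hc hne hεpos hε16 h0 hK hstr hosc g0 gK gstr gosc hri
    rw [pIdx_at hstr hi2] at hl hu
    have h00 : (0:ℝ) ≤ 2*ε*K0 := by positivity
    rw [abs_le]
    constructor <;> linarith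
  have hri : r i ∈ Icc a b :=
    ⟨by rw [← h0]; exact seq_mono hstr (Nat.zero_le _) hiK,
     by rw [← hK]; exact seq_mono hstr hiK le_rfl⟩
  have hrj : r j ∈ Icc a b :=
    ⟨by rw [← h0]; exact seq_mono hstr (Nat.zero_le _) hjK,
     by rw [← hK]; exact seq_mono hstr hjK le_rfl⟩
  refine ⟨r i, hri, r j, hrj, ?_⟩
  have hti : |rV f c a (r i) - rV f c a t0| ≤ |dV x c i - dV x c m| + 4*ε*K0 := by
    have h7 := hci i hiK
    have h8 := abs_sub_abs_le_abs_sub (rV f c a (r i) - rV f c a t0) (dV x c i - dV x c m)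
    have h9 : |rV f c a (r i) - rV f c a t0 - (dV x c i - dV x c m)| ≤ 4*ε*K0 := by
      have he : rV f c a (r i) - rV f c a t0 - (dV x c i - dV x c m) =
          (rV f c a (r i) - dV x c i) - (rV f c a t0 - dV x c m) := by ring
      rw [he]
      refine le_trans (abs_sub _ _) ?_
      linarith [abs_sub_comm (rV f c a t0) (dV x c m)]
    linarith
  have htj : |rV f c a (r j) - rV f c a t0| ≤ |dV x c j - dV x c m| + 4*ε*K0 := by
    have h7 := hci j hjK
    have h9 : |rV f c a (r j) - rV f c a t0 - (dV x c j - dV x c m)| ≤ 4*ε*K0 := by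
      have he : rV f c a (r j) - rV f c a t0 - (dV x c j - dV x c m) =
          (rV f c a (r j) - dV x c j) - (rV f c a t0 - dV x c m) := by ring
      rw [he]
      refine le_trans (abs_sub _ _) ?_
      linarith [abs_sub_comm (rV f c a t0) (dV x c m)]
    have h8 := abs_sub_abs_le_abs_sub (rV f c a (r j) - rV f c a t0) (dV x c j - dV x c m)
    linarith
  have hfi : f (r i) = x i := rfl
  have hfj : f (r j) = x j := rfl
  rw [hfi, hfj]
  linarith

/-- the candidate optimal approximation -/
noncomputable def gOpt (f : ℝ → ℝ) (c a b : ℝ) : ℝ → ℝ := fun t =>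
  sSup {y | ∃ u ∈ Icc a b, y = f u - c/2 - |rV f c a u - rV f c a t|}

lemma gOpt_ne (hab : a < b) (t : ℝ) :
    {y | ∃ u ∈ Icc a b, y = f u - c/2 - |rV f c a u - rV f c a t|}.Nonempty :=
  ⟨_, a, ⟨le_rfl, hab.le⟩, rfl⟩

lemma gOpt_bdd (hc : 0 < c) (hne : TVc f c a b ≠ ⊤) {t : ℝ} (ht : t ∈ Icc a b) :
    BddAbove {y | ∃ u ∈ Icc a b, y = f u - c/2 - |rV f c a u - rV f c a t|} := by
  refine ⟨f t + c/2, fun y hy => ?_⟩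
  obtain ⟨u, hu, rfl⟩ := hy
  have h1 := LemBr hne hc.le hu ht
  have h2 : f u - f t ≤ |f u - f t| := le_abs_self _
  linarith

lemma gOpt_lb (hc : 0 < c) (hne : TVc f c a b ≠ ⊤) {t : ℝ} (ht : t ∈ Icc a b)
    {u : ℝ} (hu : u ∈ Icc a b) :
    f u - c/2 - |rV f c a u - rV f c a t| ≤ gOpt f c a b t :=
  le_csSup (gOpt_bdd hc hne ht) ⟨u, hu, rfl⟩

lemma gOpt_band1 (hc : 0 < c) (hne : TVc f c a b ≠ ⊤) {t : ℝ} (ht : t ∈ Icc a b) :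
    f t - c/2 ≤ gOpt f c a b t := by
  have := gOpt_lb hc hne ht ht
  simpa using this

lemma gOpt_band2 (hab : a < b) (hc : 0 < c) (hne : TVc f c a b ≠ ⊤) {t : ℝ}
    (ht : t ∈ Icc a b) : gOpt f c a b t ≤ f t + c/2 := by
  refine csSup_le (gOpt_ne hab t) fun y hy => ?_
  obtain ⟨u, hu, rfl⟩ := hy
  have h1 := LemBr hne hc.le hu ht
  have h2 : f u - f t ≤ |f u - f t| := le_abs_self _
  linarith

lemma gOpt_lip (hab : a < b) (hc : 0 < c) (hne : TVc f c a b ≠ ⊤) {t1 t2 : ℝ}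
    (ht1 : t1 ∈ Icc a b) (ht2 : t2 ∈ Icc a b) :
    |gOpt f c a b t2 - gOpt f c a b t1| ≤ |rV f c a t2 - rV f c a t1| := by
  have key : ∀ s1 s2 : ℝ, s1 ∈ Icc a b → s2 ∈ Icc a b →
      gOpt f c a b s2 ≤ gOpt f c a b s1 + |rV f c a s2 - rV f c a s1| := by
    intro s1 s2 hs1 hs2
    refine csSup_le (gOpt_ne hab s2) fun y hy => ?_
    obtain ⟨u, hu, rfl⟩ := hy
    have h1 : |rV f c a u - rV f c a s1| ≤
        |rV f c a u - rV f c a s2| + |rV f c a s2 - rV f c a s1| := by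
      have := abs_sub_le (rV f c a u) (rV f c a s2) (rV f c a s1)
      linarith
    have h2 : f u - c/2 - |rV f c a u - rV f c a s1| ≤ gOpt f c a b s1 :=
      gOpt_lb hc hne hs1 hu
    linarith
  rw [abs_sub_le_iff]
  constructor
  · have := key t1 t2 ht1 ht2
    have h3 : |rV f c a t2 - rV f c a t1| = |rV f c a t1 - rV f c a t2| := abs_sub_comm _ _
    linarith
  · have := key t2 t1 ht2 ht1
    have h3 : |rV f c a t2 - rV f c a t1| = |rV f c a t1 - rV f c a t2| := abs_sub_comm _ _
    linarith

end Main

end OptApprox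

/-- If `c` does not exceed the oscillation of `f` on `[a,b]`, then the
function `g` with `‖g − f‖_∞ ≤ c/2` and `TV(g,[a,s]) = TV^c(f,[a,s])` for all
`s ∈ (a,b]` exists and is unique (as a function on `[a,b]`). -/
theorem optimal_approx_unique (a b : ℝ) (hab : a < b) (f : ℝ → ℝ)
    (hf : Cadlag f a b) (c : ℝ) (hc : 0 < c)
    (hcosc : c ≤ sSup {x : ℝ | ∃ s ∈ Set.Icc a b, ∃ u ∈ Set.Icc a b, x = |f s - f u|}) :
    ∃ g : ℝ → ℝ,
      ((∀ t ∈ Set.Icc a b, |g t - f t| ≤ c / 2) ∧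
        ∀ s ∈ Set.Ioc a b, TVar g a s = TVc f c a s) ∧
      ∀ g' : ℝ → ℝ,
        ((∀ t ∈ Set.Icc a b, |g' t - f t| ≤ c / 2) ∧
          ∀ s ∈ Set.Ioc a b, TVar g' a s = TVc f c a s) →
        ∀ t ∈ Set.Icc a b, g' t = g t := by
  have hne : TVc f c a b ≠ ⊤ := OptApprox.TVc_ne_top hab hc hf le_rfl
  have hband : ∀ t ∈ Set.Icc a b, |OptApprox.gOpt f c a b t - f t| ≤ c / 2 := by
    intro t ht
    rw [abs_le]
    constructor
    · have := OptApprox.gOpt_band1 hc hne ht; linarith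
    · have := OptApprox.gOpt_band2 hab hc hne ht; linarith
  have hTV : ∀ s ∈ Set.Ioc a b, TVar (OptApprox.gOpt f c a b) a s = TVc f c a s := by
    intro s hs
    refine le_antisymm ?_ ?_
    · rw [OptApprox.TVar_eq_TVc]
      refine OptApprox.TVc_le fun n t ht => ?_
      have hmem : ∀ i ≤ n, t i ∈ Set.Icc a b := fun i hi =>
        ⟨(OptApprox.isPart_mem ht hi).1, le_trans (OptApprox.isPart_mem ht hi).2 hs.2⟩
      have hterm : ∀ i ∈ Finset.range n,
          ENNReal.ofReal (dist (OptApprox.gOpt f c a b (t (i+1)))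
            (OptApprox.gOpt f c a b (t i)) - 0) ≤
          ENNReal.ofReal (OptApprox.rV f c a (t (i+1)) - OptApprox.rV f c a (t i)) := by
        intro i hi
        have hi' := Finset.mem_range.1 hi
        refine ENNReal.ofReal_le_ofReal ?_
        rw [Real.dist_eq, sub_zero]
        have hlip := OptApprox.gOpt_lip hab hc hne (hmem i (by omega)) (hmem (i+1) (by omega))
        have hmono := OptApprox.rV_mono (f := f) (c := c) hne (ht.2.2 i hi').le
          (hmem (i+1) (by omega)).2
        have h5 : |OptApprox.rV f c a (t (i+1)) - OptApprox.rV f c a (t i)| =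
            OptApprox.rV f c a (t (i+1)) - OptApprox.rV f c a (t i) :=
          abs_of_nonneg (by linarith)
        rw [h5] at hlip
        exact hlip
      calc OptApprox.psum (OptApprox.gOpt f c a b) 0 n t
          ≤ ∑ i ∈ Finset.range n,
              ENNReal.ofReal (OptApprox.rV f c a (t (i+1)) - OptApprox.rV f c a (t i)) :=
            Finset.sum_le_sum hterm
        _ = ENNReal.ofReal (∑ i ∈ Finset.range n,
              (OptApprox.rV f c a (t (i+1)) - OptApprox.rV f c a (t i))) :=
            (ENNReal.ofReal_sum_of_nonneg fun i hi => by
              have hi' := Finset.mem_range.1 hi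
              have := OptApprox.rV_mono (f := f) (c := c) hne (ht.2.2 i hi').le
                (hmem (i+1) (by omega)).2
              linarith).symm
        _ = ENNReal.ofReal (OptApprox.rV f c a (t n) - OptApprox.rV f c a (t 0)) := by
            rw [Finset.sum_range_sub (fun i => OptApprox.rV f c a (t i))]
        _ ≤ ENNReal.ofReal (OptApprox.rV f c a s) := by
            refine ENNReal.ofReal_le_ofReal ?_
            have h1 : 0 ≤ OptApprox.rV f c a (t 0) := OptApprox.rV_nonneg
            have h2 := OptApprox.rV_mono (f := f) (c := c) hne ht.2.1 hs.2
            linarith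
        _ = TVc f c a s := (OptApprox.TVc_eq_ofReal_rV hne hs.2).symm
    · refine OptApprox.TVc_le fun n t ht => ?_
      rw [OptApprox.TVar_eq_TVc]
      refine le_trans ?_ (OptApprox.psum_le_TVc (cc := 0) ht)
      have hmem : ∀ i ≤ n, t i ∈ Set.Icc a b := fun i hi =>
        ⟨(OptApprox.isPart_mem ht hi).1, le_trans (OptApprox.isPart_mem ht hi).2 hs.2⟩
      refine Finset.sum_le_sum fun i hi => ?_
      have hi' := Finset.mem_range.1 hi
      refine ENNReal.ofReal_le_ofReal ?_
      rw [Real.dist_eq, Real.dist_eq, sub_zero]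
      have hb1 := hband (t i) (hmem i (by omega))
      have hb2 := hband (t (i+1)) (hmem (i+1) (by omega))
      rw [abs_le] at hb1 hb2
      have he : f (t (i+1)) - f (t i) =
          (OptApprox.gOpt f c a b (t (i+1)) - OptApprox.gOpt f c a b (t i))
          - (OptApprox.gOpt f c a b (t (i+1)) - f (t (i+1)))
          + (OptApprox.gOpt f c a b (t i) - f (t i)) := by ring
      have h1 : |f (t (i+1)) - f (t i)| ≤
          |OptApprox.gOpt f c a b (t (i+1)) - OptApprox.gOpt f c a b (t i)|
          + |OptApprox.gOpt f c a b (t (i+1)) - f (t (i+1))|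
          + |OptApprox.gOpt f c a b (t i) - f (t i)| := by
        rw [he]
        refine le_trans (abs_add_le _ _) ?_
        gcongr
        exact abs_sub _ _
      have h2 : |OptApprox.gOpt f c a b (t (i+1)) - f (t (i+1))| ≤ c/2 := abs_le.2 hb2
      have h3 : |OptApprox.gOpt f c a b (t i) - f (t i)| ≤ c/2 := abs_le.2 hb1
      have h4 : |f (t (i+1)) - f (t i)| - c ≤
          |OptApprox.gOpt f c a b (t (i+1)) - OptApprox.gOpt f c a b (t i)| := by
        linarith
      linarith [le_abs_self (f (t (i+1)) - f (t i)), abs_nonneg (f (t (i+1)) - f (t i))]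
  refine ⟨OptApprox.gOpt f c a b, ⟨hband, hTV⟩, ?_⟩
  rintro g' ⟨hband', hTV'⟩ t ht
  have hstep : ∀ t1 t2 : ℝ, a ≤ t1 → t1 ≤ t2 → t2 ≤ b →
      |g' t2 - g' t1| ≤ OptApprox.rV f c a t2 - OptApprox.rV f c a t1 := by
    intro t1 t2 h1 h2 h3
    rcases eq_or_lt_of_le (le_trans h1 h2) with h4 | h4
    · have h5 : t1 = a := le_antisymm (h4 ▸ h2) h1
      rw [← h4, h5]
      simp
    · have hg2 : TVc g' 0 a t2 = TVc f c a t2 := by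
        rw [← OptApprox.TVar_eq_TVc]; exact hTV' t2 ⟨h4, h3⟩
      have hg1 : TVc g' 0 a t1 = TVc f c a t1 := by
        rcases eq_or_lt_of_le h1 with h5 | h5
        · rw [← h5, OptApprox.TVc_self, OptApprox.TVc_self]
        · rw [← OptApprox.TVar_eq_TVc]; exact hTV' t1 ⟨h5, le_trans h2 h3⟩
      have happ := OptApprox.TVc_append g' (cc := 0) le_rfl h1 h2
      rw [hg1, hg2] at happ
      have hne2 : TVc f c a t2 ≠ ⊤ := ne_top_of_le_ne_top hne (OptApprox.TVc_mono f c a h3)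
      have hne1 : TVc f c a t1 ≠ ⊤ :=
        ne_top_of_le_ne_top hne (OptApprox.TVc_mono f c a (le_trans h2 h3))
      have h6 := ENNReal.toReal_mono hne2 happ
      rw [ENNReal.toReal_add hne1 ENNReal.ofReal_ne_top, sub_zero,
        ENNReal.toReal_ofReal dist_nonneg, Real.dist_eq] at h6
      unfold OptApprox.rV
      linarith
  have hlow : OptApprox.gOpt f c a b t ≤ g' t := by
    refine csSup_le (OptApprox.gOpt_ne hab t) fun y hy => ?_
    obtain ⟨u, hu, rfl⟩ := hy
    have hbu := abs_le.1 (hband' u hu)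
    rcases le_total u t with h8 | h8
    · have h9 := hstep u t hu.1 h8 ht.2
      have h10 : |OptApprox.rV f c a u - OptApprox.rV f c a t| =
          OptApprox.rV f c a t - OptApprox.rV f c a u := by
        rw [abs_sub_comm]
        exact abs_of_nonneg (by linarith [OptApprox.rV_mono (f := f) (c := c) hne h8 ht.2])
      have h11 := abs_le.1 h9
      linarith [h10, h11.1, h11.2]
    · have h9 := hstep t u ht.1 h8 hu.2
      have h10 : |OptApprox.rV f c a u - OptApprox.rV f c a t| =
          OptApprox.rV f c a u - OptApprox.rV f c a t :=
        abs_of_nonneg (by linarith [OptApprox.rV_mono (f := f) (c := c) hne h8 hu.2])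
      have h11 := abs_le.1 h9
      linarith [h10, h11.1, h11.2]
  have hup : ∀ v ∈ Set.Icc a b, g' t ≤ f v + c/2 + |OptApprox.rV f c a v - OptApprox.rV f c a t| := by
    intro v hv
    have hbv := abs_le.1 (hband' v hv)
    rcases le_total v t with h8 | h8
    · have h9 := hstep v t hv.1 h8 ht.2
      have h10 : |OptApprox.rV f c a v - OptApprox.rV f c a t| =
          OptApprox.rV f c a t - OptApprox.rV f c a v := by
        rw [abs_sub_comm]
        exact abs_of_nonneg (by linarith [OptApprox.rV_mono (f := f) (c := c) hne h8 ht.2])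
      have h11 := abs_le.1 h9
      linarith [h10, h11.1, h11.2]
    · have h9 := hstep t v ht.1 h8 hv.2
      have h10 : |OptApprox.rV f c a v - OptApprox.rV f c a t| =
          OptApprox.rV f c a v - OptApprox.rV f c a t :=
        abs_of_nonneg (by linarith [OptApprox.rV_mono (f := f) (c := c) hne h8 hv.2])
      have h11 := abs_le.1 h9
      linarith [h10, h11.1, h11.2]
  have hfinal : ∀ η : ℝ, 0 < η → g' t ≤ OptApprox.gOpt f c a b t + η := by
    intro η hη
    obtain ⟨u, hu, v, hv, hA⟩ := OptApprox.lemA hab hc hf hcosc hne ht hη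
    have h1 := OptApprox.gOpt_lb hc hne ht hu
    have h2 := hup v hv
    linarith
  have h3 : g' t ≤ OptApprox.gOpt f c a b t := by
    by_contra h
    push_neg at h
    have := hfinal ((g' t - OptApprox.gOpt f c a b t)/2) (by linarith)
    linarith
  exact le_antisymm h3 hlow
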